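/- Suppose λ_p = ν/p^{α} for p ≥ 1 with constants ν > 0 and α > 1. Then there exist constants 0 < c ≤ C such that for all sufficiently small τ > 0, c·τ^{1−1/α} ≤ ∑_{p≥1} τλ_p/(τ+λ_p) ≤ C·τ^{1−1/α}. -/

import Mathlib

open Real Finset

lemma step_bound (α : ℝ) (hα : 1 < α) (x : ℝ) (hx : 1 ≤ x) :
    (α - 1) * (x + 1) ^ (-α) ≤ x ^ (1 - α) - (x + 1) ^ (1 - α) := by
  have hx0 : 0 < x := lt_of_lt_of_le one_pos hx
  obtain ⟨c, hc, hderiv⟩ := exists_hasDerivAt_eq_slope (fun t => t ^ (1 - α))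
    (fun t => (1 - α) * t ^ (-α)) (by linarith : x < x + 1)
    (by
      apply ContinuousOn.rpow_const continuousOn_id
      intro t ht
      exact Or.inl (ne_of_gt (lt_of_lt_of_le hx0 ht.1)))
    (by
      intro t ht
      have h := Real.hasDerivAt_rpow_const (x := t) (p := 1 - α)
        (Or.inl (ne_of_gt (lt_trans hx0 ht.1)))
      have he : 1 - α - 1 = -α := by ring
      rwa [he] at h)
  have hc0 : 0 < c := lt_trans hx0 hc.1
  have hmono : (x + 1) ^ (-α) ≤ c ^ (-α) :=
    Real.rpow_le_rpow_of_nonpos hc0 hc.2.le (by linarith)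
  have heq : (1 - α) * c ^ (-α) = (x + 1) ^ (1 - α) - x ^ (1 - α) := by
    rw [hderiv]; ring_nf
  nlinarith [hmono, heq]

lemma tail_sum_bound (α : ℝ) (hα : 1 < α) (N : ℕ) (hN : 1 ≤ N) (n : ℕ) :
    ∑ p ∈ Finset.range n, (((p : ℝ) + N) + 1) ^ (-α) ≤ (N : ℝ) ^ (1 - α) / (α - 1) := by
  have hα1 : (0 : ℝ) < α - 1 := by linarith
  have hN1 : (1 : ℝ) ≤ (N : ℝ) := by exact_mod_cast hN
  have key : ∀ m : ℕ, ∑ p ∈ Finset.range m, (((p : ℝ) + N) + 1) ^ (-α) ≤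
      ((N : ℝ) ^ (1 - α) - ((N : ℝ) + m) ^ (1 - α)) / (α - 1) := by
    intro m
    induction m with
    | zero => simp
    | succ m ih =>
      rw [Finset.sum_range_succ]
      have hm : (1 : ℝ) ≤ (N : ℝ) + m := by
        have : (0 : ℝ) ≤ (m : ℝ) := Nat.cast_nonneg m
        linarith
      have hstep := step_bound α hα ((N : ℝ) + m) hm
      have : ((m : ℝ) + N + 1) ^ (-α) ≤
          (((N : ℝ) + m) ^ (1 - α) - ((N : ℝ) + m + 1) ^ (1 - α)) / (α - 1) := by
        rw [le_div_iff₀ hα1]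
        calc ((m : ℝ) + N + 1) ^ (-α) * (α - 1)
            = (α - 1) * (((N : ℝ) + m) + 1) ^ (-α) := by ring_nf
          _ ≤ _ := hstep
      push_cast
      calc ∑ p ∈ Finset.range m, (((p : ℝ) + N) + 1) ^ (-α) + ((m : ℝ) + N + 1) ^ (-α)
          ≤ ((N : ℝ) ^ (1 - α) - ((N : ℝ) + m) ^ (1 - α)) / (α - 1) +
            (((N : ℝ) + m) ^ (1 - α) - ((N : ℝ) + m + 1) ^ (1 - α)) / (α - 1) := by
            exact add_le_add ih this
        _ = ((N : ℝ) ^ (1 - α) - ((N : ℝ) + (m + 1)) ^ (1 - α)) / (α - 1) := by ring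
  refine (key n).trans ?_
  have : (0 : ℝ) ≤ ((N : ℝ) + n) ^ (1 - α) := Real.rpow_nonneg (by positivity) _
  gcongr
  linarith

theorem stmt3 (ν α : ℝ) (hν : 0 < ν) (hα : 1 < α) :
    ∃ c C : ℝ, 0 < c ∧ c ≤ C ∧ ∃ τ0 : ℝ, 0 < τ0 ∧ ∀ τ : ℝ, 0 < τ → τ < τ0 →
      c * τ ^ (1 - 1 / α) ≤
          (∑' p : ℕ, τ * (ν * ((p : ℝ) + 1) ^ (-α)) / (τ + ν * ((p : ℝ) + 1) ^ (-α))) ∧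
        (∑' p : ℕ, τ * (ν * ((p : ℝ) + 1) ^ (-α)) / (τ + ν * ((p : ℝ) + 1) ^ (-α)))
          ≤ C * τ ^ (1 - 1 / α) := by
  have hα0 : (0 : ℝ) < α := by linarith
  have hα1 : (0 : ℝ) < α - 1 := by linarith
  have hC1 : (1 : ℝ) ≤ 1 + 2 ^ (α - 1) / (α - 1) := by
    have : (0 : ℝ) < 2 ^ (α - 1) := Real.rpow_pos_of_pos two_pos _
    have := div_pos this hα1
    linarith
  refine ⟨ν ^ (1 / α) / 4, ν ^ (1 / α) * (1 + 2 ^ (α - 1) / (α - 1)), ?_, ?_, ν / 2 ^ α, ?_, ?_⟩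
  · have := Real.rpow_pos_of_pos hν (1 / α); linarith
  · have h0 : (0 : ℝ) < ν ^ (1 / α) := Real.rpow_pos_of_pos hν _
    nlinarith
  · have : (0 : ℝ) < 2 ^ α := Real.rpow_pos_of_pos two_pos _
    positivity
  intro τ hτ hτ0
  -- basic setup
  set lam : ℕ → ℝ := fun p => ν * ((p : ℝ) + 1) ^ (-α) with hlam
  have hlampos : ∀ p : ℕ, 0 < lam p := by
    intro p
    have : (0 : ℝ) < ((p : ℝ) + 1) ^ (-α) := Real.rpow_pos_of_pos (by positivity) _
    exact mul_pos hν this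
  set f : ℕ → ℝ := fun p => τ * lam p / (τ + lam p) with hf
  have hfpos : ∀ p, 0 < f p := fun p => by
    have := hlampos p
    exact div_pos (mul_pos hτ this) (by linarith)
  have hf_le_lam : ∀ p, f p ≤ lam p := by
    intro p
    have hl := hlampos p
    rw [div_le_iff₀ (by linarith)]
    nlinarith
  have hf_le_tau : ∀ p, f p ≤ τ := by
    intro p
    have hl := hlampos p
    rw [div_le_iff₀ (by linarith)]
    nlinarith
  have hlam_summable : Summable lam := by
    have : Summable (fun p : ℕ => ((p : ℝ) + 1) ^ (-α)) := by
      have h1 : Summable (fun p : ℕ => ((p : ℝ)) ^ (-α)) := by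
        rw [Real.summable_nat_rpow]; linarith
      have := (summable_nat_add_iff 1).2 h1
      refine this.congr fun p => ?_
      push_cast
      norm_num
    exact this.mul_left ν
  have hf_summable : Summable f :=
    hlam_summable.of_nonneg_of_le (fun p => (hfpos p).le) hf_le_lam
  -- the quantity y and N
  set y : ℝ := (ν / τ) ^ (1 / α) with hy
  have hvt : (2 : ℝ) ^ α < ν / τ := by
    rw [lt_div_iff₀ hτ]
    have h2 : (0 : ℝ) < 2 ^ α := Real.rpow_pos_of_pos two_pos _
    calc 2 ^ α * τ < 2 ^ α * (ν / 2 ^ α) := by exact mul_lt_mul_of_pos_left hτ0 h2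
      _ = ν := by field_simp
  have hvt0 : 0 < ν / τ := div_pos hν hτ
  have hy2 : (2 : ℝ) ≤ y := by
    have : ((2 : ℝ) ^ α) ^ (1 / α) ≤ y :=
      Real.rpow_le_rpow (by positivity) hvt.le (by positivity)
    rwa [← Real.rpow_mul (by norm_num), mul_one_div, div_self (ne_of_gt hα0),
      Real.rpow_one] at this
  have hy0 : 0 < y := by linarith
  set N : ℕ := ⌊y⌋₊ with hN
  have hNy : (N : ℝ) ≤ y := Nat.floor_le hy0.le
  have hyN : y - 1 < (N : ℝ) := Nat.sub_one_lt_floor y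
  have hN1 : 1 ≤ N := by
    have h1 : ((1 : ℕ) : ℝ) ≤ y := by push_cast; linarith
    exact Nat.le_floor h1
  have hyα : y ^ α = ν / τ := by
    rw [hy, ← Real.rpow_mul hvt0.le, one_div_mul_cancel (ne_of_gt hα0), Real.rpow_one]
  -- key identity : y * τ = ν ^ (1/α) * τ ^ (1 - 1/α)
  have hkey : y * τ = ν ^ (1 / α) * τ ^ (1 - 1 / α) := by
    rw [hy, Real.div_rpow hν.le hτ.le]
    rw [show (1 : ℝ) - 1 / α = 1 + (-(1 / α)) by ring, Real.rpow_add hτ, Real.rpow_one,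
      Real.rpow_neg hτ.le]
    field_simp
  constructor
  · -- lower bound
    have hterm : ∀ p ∈ Finset.range N, τ / 2 ≤ f p := by
      intro p hp
      rw [Finset.mem_range] at hp
      have hp1 : (p : ℝ) + 1 ≤ y := by
        have : (p : ℝ) + 1 ≤ (N : ℝ) := by exact_mod_cast Nat.succ_le_of_lt hp
        linarith
      have hpow : ((p : ℝ) + 1) ^ α ≤ ν / τ := by
        rw [← hyα]
        exact Real.rpow_le_rpow (by positivity) hp1 hα0.le
      have hlamτ : τ ≤ lam p := by
        have hpp : (0 : ℝ) < ((p : ℝ) + 1) ^ α := Real.rpow_pos_of_pos (by positivity) _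
        rw [hlam]
        simp only
        rw [Real.rpow_neg (by positivity), ← div_eq_mul_inv, le_div_iff₀ hpp]
        calc τ * ((p : ℝ) + 1) ^ α ≤ τ * (ν / τ) := by
              exact mul_le_mul_of_nonneg_left hpow hτ.le
          _ = ν := by field_simp
      have hl := hlampos p
      rw [hf]
      simp only
      rw [div_le_div_iff₀ two_pos (by linarith)]
      nlinarith
    have hlow : (N : ℝ) * (τ / 2) ≤ ∑' p, f p := by
      calc (N : ℝ) * (τ / 2) = ∑ p ∈ Finset.range N, (τ / 2) := by
            rw [Finset.sum_const, Finset.card_range, nsmul_eq_mul]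
        _ ≤ ∑ p ∈ Finset.range N, f p := Finset.sum_le_sum hterm
        _ ≤ ∑' p, f p := Summable.sum_le_tsum _ (fun p _ => (hfpos p).le) hf_summable
    refine le_trans ?_ hlow
    have h4 : ν ^ (1 / α) / 4 * τ ^ (1 - 1 / α) = y * τ / 4 := by linear_combination -hkey / 4
    rw [h4]
    have hyhalf : y / 2 ≤ (N : ℝ) := by linarith
    nlinarith [mul_le_mul_of_nonneg_right hyhalf (le_of_lt (half_pos hτ))]
  · -- upper bound
    rw [← Summable.sum_add_tsum_nat_add N hf_summable]
    have hhead : ∑ p ∈ Finset.range N, f p ≤ y * τ := by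
      calc ∑ p ∈ Finset.range N, f p ≤ ∑ p ∈ Finset.range N, τ :=
            Finset.sum_le_sum fun p _ => hf_le_tau p
        _ = (N : ℝ) * τ := by rw [Finset.sum_const, Finset.card_range, nsmul_eq_mul]
        _ ≤ y * τ := mul_le_mul_of_nonneg_right hNy hτ.le
    have htail : ∑' p : ℕ, f (p + N) ≤ ν * ((N : ℝ) ^ (1 - α) / (α - 1)) := by
      have h1 : ∑' p : ℕ, f (p + N) ≤ ∑' p : ℕ, lam (p + N) := by
        apply Summable.tsum_le_tsum (fun p => hf_le_lam (p + N))
          ((summable_nat_add_iff N).2 hf_summable) ((summable_nat_add_iff N).2 hlam_summable)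
      refine h1.trans ?_
      have h2 : ∑' p : ℕ, lam (p + N) = ν * ∑' p : ℕ, (((p : ℝ) + N) + 1) ^ (-α) := by
        rw [← tsum_mul_left]
        congr 1
        funext p
        rw [hlam]
        push_cast
        ring_nf
      rw [h2]
      apply mul_le_mul_of_nonneg_left ?_ hν.le
      apply tsum_le_of_sum_range_le (fun n => Real.rpow_nonneg (by positivity) _)
      intro n
      exact tail_sum_bound α hα N hN1 n
    have hNbound : (N : ℝ) ^ (1 - α) ≤ (y / 2) ^ (1 - α) := by
      apply Real.rpow_le_rpow_of_nonpos (by linarith) (by linarith) (by linarith)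
    have hy2τ : (y / 2) ^ (1 - α) = 2 ^ (α - 1) * (y * τ / ν) := by
      rw [Real.div_rpow hy0.le (by norm_num)]
      have hyy : y ^ (1 - α) = y * (τ / ν) := by
        rw [show (1 : ℝ) - α = 1 + (-α) by ring, Real.rpow_add hy0, Real.rpow_one,
          Real.rpow_neg hy0.le, hyα]
        field_simp
      rw [hyy, show (1 : ℝ) - α = -(α - 1) by ring, Real.rpow_neg (by norm_num)]
      field_simp
    have htail2 : ∑' p : ℕ, f (p + N) ≤ 2 ^ (α - 1) / (α - 1) * (y * τ) := by
      refine htail.trans ?_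
      calc ν * ((N : ℝ) ^ (1 - α) / (α - 1)) ≤ ν * ((y / 2) ^ (1 - α) / (α - 1)) := by
            apply mul_le_mul_of_nonneg_left ?_ hν.le
            gcongr
        _ = 2 ^ (α - 1) / (α - 1) * (y * τ) := by
            rw [hy2τ]; field_simp
    calc ∑ p ∈ Finset.range N, f p + ∑' p : ℕ, f (p + N)
        ≤ y * τ + 2 ^ (α - 1) / (α - 1) * (y * τ) := add_le_add hhead htail2
      _ = ν ^ (1 / α) * (1 + 2 ^ (α - 1) / (α - 1)) * τ ^ (1 - 1 / α) := by
          linear_combination (1 + 2 ^ (α - 1) / (α - 1)) * hkey
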